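/- Let p be a real-valued valuated matroid of rank d on {1,…,n}. Define y ∈ ℝⁿ by y_i = min over all (d−1)-subsets σ ⊆ {1,…,n} with i ∉ σ of (p(σ∪{i}) − min_{j ∉ σ} p(σ∪{j})). Then y is the least element of {w ∈ L_p : w ≥ 0 coordinatewise}; that is, the projection of the origin onto L_p is the coordinatewise minimum (tropical sum) of all cocircuits of p, each normalized to have nonnegative entries with at least one entry zero. -/

import Mathlib

/- The projection of the origin onto a tropical linear space L_p is the tropical sum of
   the normalized cocircuits: y_i = min_{σ : |σ| = d−1, i ∉ σ} (p(σ∪{i}) − min_{j∉σ} p(σ∪{j}))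
   is the least element of {w ∈ L_p : w ≥ 0}. -/

noncomputable section

/-- The minimum of `f` over the finite set `s` is attained at least twice. -/
def MinAttainedTwice {ι α : Type*} [LinearOrder α] (s : Finset ι) (f : ι → α) : Prop :=
  ∃ i ∈ s, ∃ j ∈ s, i ≠ j ∧ f i = f j ∧ ∀ k ∈ s, f i ≤ f k

/-- A real-valued valuated matroid of rank `d` on `{1,…,n}` (only the values on
`d`-element subsets matter): the exchange axiom with minimum over `i ∈ τ ∖ σ`. -/
def IsValuatedMatroidR (d n : ℕ) (p : Finset (Fin n) → ℝ) : Prop :=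
  ∀ σ τ : Finset (Fin n), σ.card = d - 1 → τ.card = d + 1 →
    MinAttainedTwice (τ \ σ) (fun i => p (insert i σ) + p (τ.erase i))

/-- Membership in the tropical linear space `L_p`. -/
def InTropLinSpace (d n : ℕ) (p : Finset (Fin n) → ℝ) (x : Fin n → ℝ) : Prop :=
  ∀ τ : Finset (Fin n), τ.card = d + 1 →
    MinAttainedTwice τ (fun i => p (τ.erase i) + x i)

/-- The tropical sum of the normalized cocircuits:
`y i = min_{σ : |σ| = d−1, i ∉ σ} (p(σ∪{i}) − min_{j ∉ σ} p(σ∪{j}))`.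
(The inner minimum is taken over `insert i σᶜ`, which equals `σᶜ` for the relevant
sets `σ` with `i ∉ σ`.) -/
def cocircuitTropSum {n : ℕ} (d : ℕ) (hd : 1 ≤ d) (hdn : d ≤ n)
    (p : Finset (Fin n) → ℝ) : Fin n → ℝ :=
  fun i =>
    (((Finset.univ : Finset (Fin n)).powersetCard (d - 1)).filter (fun σ => i ∉ σ)).inf'
      (by
        obtain ⟨t, hts, htc⟩ := Finset.exists_subset_card_eq (s := Finset.univ.erase i)
          (n := d - 1)
          (by
            have hc : (Finset.univ.erase i).card = n - 1 := by
              rw [Finset.card_erase_of_mem (Finset.mem_univ i)]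
              simp
            omega)
        refine ⟨t, Finset.mem_filter.mpr ⟨Finset.mem_powersetCard.mpr
          ⟨Finset.subset_univ t, htc⟩, fun hit => ?_⟩⟩
        exact (Finset.notMem_erase i Finset.univ) (hts hit))
      (fun σ => p (insert i σ) -
        (insert i σᶜ).inf' (Finset.insert_nonempty _ _) (fun j => p (insert j σ)))

theorem projection_of_origin_is_trop_sum_of_cocircuits {d n : ℕ} (hd : 1 ≤ d) (hdn : d ≤ n)
    (p : Finset (Fin n) → ℝ) (hp : IsValuatedMatroidR d n p) :
    IsLeast {w : Fin n → ℝ | InTropLinSpace d n p w ∧ 0 ≤ w}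
      (cocircuitTropSum d hd hdn p) := by
  classical
  -- abbreviations
  set g : Fin n → Finset (Fin n) → ℝ := fun i σ =>
    p (insert i σ) - (insert i σᶜ).inf' (Finset.insert_nonempty _ _) (fun j => p (insert j σ))
    with hgdef
  set F : Fin n → Finset (Finset (Fin n)) := fun i =>
    ((Finset.univ : Finset (Fin n)).powersetCard (d - 1)).filter (fun σ => i ∉ σ) with hFdef
  have hmemF : ∀ (i : Fin n) (σ : Finset (Fin n)), σ ∈ F i ↔ (σ.card = d - 1 ∧ i ∉ σ) := by
    intro i σ
    simp [hFdef, Finset.mem_filter, Finset.mem_powersetCard_univ]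
  have hFne : ∀ i : Fin n, (F i).Nonempty := by
    intro i
    obtain ⟨t, hts, htc⟩ := Finset.exists_subset_card_eq (s := Finset.univ.erase i)
      (n := d - 1)
      (by
        have hc : ((Finset.univ : Finset (Fin n)).erase i).card = n - 1 := by
          rw [Finset.card_erase_of_mem (Finset.mem_univ i)]
          simp
        omega)
    refine ⟨t, (hmemF i t).mpr ⟨htc, fun hit => ?_⟩⟩
    exact (Finset.notMem_erase i Finset.univ) (hts hit)
  have hy : ∀ i : Fin n, cocircuitTropSum d hd hdn p i = (F i).inf' (hFne i) (g i) :=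
    fun i => rfl
  have key : ∀ (s t : Finset (Fin n)), s = t → ∀ (hs : s.Nonempty) (ht : t.Nonempty)
      (f : Fin n → ℝ), s.inf' hs f = t.inf' ht f := by
    rintro s t rfl _ _ f; rfl
  have hins : ∀ (i : Fin n) (σ : Finset (Fin n)), i ∉ σ → insert i σᶜ = σᶜ := by
    intro i σ h
    exact Finset.insert_eq_self.mpr (Finset.mem_compl.mpr h)
  have hyle : ∀ (i : Fin n) (σ : Finset (Fin n)), σ ∈ F i →
      cocircuitTropSum d hd hdn p i ≤ g i σ := by
    intro i σ hσ
    rw [hy i]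
    exact Finset.inf'_le _ hσ
  constructor
  · refine Set.mem_setOf_eq ▸ ⟨?_, ?_⟩
    · -- y ∈ L_p
      intro τ hτ
      have hτne : τ.Nonempty := Finset.card_pos.mp (by omega)
      obtain ⟨i₀, hi₀τ, hi₀min⟩ := Finset.exists_min_image τ
        (fun k => p (τ.erase k) + cocircuitTropSum d hd hdn p k) hτne
      obtain ⟨σ₀, hσ₀F, hσ₀eq⟩ := Finset.exists_mem_eq_inf' (hFne i₀) (g i₀)
      obtain ⟨hσ₀card, hi₀σ₀⟩ := (hmemF i₀ σ₀).mp hσ₀F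
      have hy₀ : cocircuitTropSum d hd hdn p i₀ = g i₀ σ₀ := by rw [hy i₀, hσ₀eq]
      have hcne : (σ₀ᶜ : Finset (Fin n)).Nonempty := ⟨i₀, Finset.mem_compl.mpr hi₀σ₀⟩
      set M : ℝ := σ₀ᶜ.inf' hcne (fun j => p (insert j σ₀)) with hM
      have hgM : ∀ i : Fin n, i ∉ σ₀ → g i σ₀ = p (insert i σ₀) - M := by
        intro i hi
        have := key _ _ (hins i σ₀ hi) (Finset.insert_nonempty _ _) hcne
          (fun j => p (insert j σ₀))
        simp only [hgdef]
        rw [this]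
      obtain ⟨a, ha, b, hb, hab, habeq, hamin⟩ := hp σ₀ τ hσ₀card hτ
      obtain ⟨haτ, haσ₀⟩ := Finset.mem_sdiff.mp ha
      obtain ⟨hbτ, hbσ₀⟩ := Finset.mem_sdiff.mp hb
      have hi₀sd : i₀ ∈ τ \ σ₀ := Finset.mem_sdiff.mpr ⟨hi₀τ, hi₀σ₀⟩
      -- for x ∈ τ \ σ₀, f x ≤ F x - M and f i₀ = F i₀ - M
      have h1 : ∀ x : Fin n, x ∈ τ \ σ₀ →
          p (τ.erase x) + cocircuitTropSum d hd hdn p x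
            ≤ (p (insert x σ₀) + p (τ.erase x)) - M := by
        intro x hx
        obtain ⟨hxτ, hxσ₀⟩ := Finset.mem_sdiff.mp hx
        have h2 : cocircuitTropSum d hd hdn p x ≤ g x σ₀ :=
          hyle x σ₀ ((hmemF x σ₀).mpr ⟨hσ₀card, hxσ₀⟩)
        have h3 := hgM x hxσ₀
        linarith
      have hfi₀ : p (τ.erase i₀) + cocircuitTropSum d hd hdn p i₀
          = (p (insert i₀ σ₀) + p (τ.erase i₀)) - M := by
        rw [hy₀, hgM i₀ hi₀σ₀]; ring
      have hfa : p (τ.erase a) + cocircuitTropSum d hd hdn p a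
          = p (τ.erase i₀) + cocircuitTropSum d hd hdn p i₀ := by
        have h4 := hamin i₀ hi₀sd
        have h5 := h1 a ha
        have h6 := hi₀min a haτ
        simp only at h4 h5 h6 ⊢
        linarith
      have hfb : p (τ.erase b) + cocircuitTropSum d hd hdn p b
          = p (τ.erase i₀) + cocircuitTropSum d hd hdn p i₀ := by
        have habeq' : p (insert a σ₀) + p (τ.erase a) = p (insert b σ₀) + p (τ.erase b) :=
          habeq
        have h4' : p (insert a σ₀) + p (τ.erase a) ≤ p (insert i₀ σ₀) + p (τ.erase i₀) :=
          hamin i₀ hi₀sd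
        have h4 : p (insert b σ₀) + p (τ.erase b) ≤ p (insert i₀ σ₀) + p (τ.erase i₀) := by
          linarith
        have h5 := h1 b hb
        have h6 := hi₀min b hbτ
        linarith
      refine ⟨a, haτ, b, hbτ, hab, by simpa using hfa.trans hfb.symm, ?_⟩
      intro k hk
      have := hi₀min k hk
      simp only at this ⊢
      rw [hfa]
      exact this
    · -- 0 ≤ y
      refine Pi.le_def.mpr fun i => ?_
      rw [hy i]
      refine Finset.le_inf' _ _ ?_
      intro σ hσ
      have h1 : (insert i σᶜ).inf' (Finset.insert_nonempty _ _) (fun j => p (insert j σ))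
          ≤ p (insert i σ) := Finset.inf'_le _ (Finset.mem_insert_self i _)
      simp only [hgdef, Pi.zero_apply]
      linarith
  · -- lower bound
    rintro w ⟨hwL, hw0⟩
    refine Pi.le_def.mpr fun i => ?_
    set q : Finset (Fin n) → ℝ := fun B => p B - ∑ k ∈ B, w k with hqdef
    have hSne : ((Finset.univ : Finset (Fin n)).powersetCard d).Nonempty := by
      rw [Finset.powersetCard_nonempty]
      simp [hdn]
    obtain ⟨B₀, hB₀S, hB₀min⟩ := Finset.exists_min_image _ q hSne
    have hexists : ∃ B ∈ (Finset.univ : Finset (Fin n)).powersetCard d, i ∈ B ∧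
        ∀ B' ∈ (Finset.univ : Finset (Fin n)).powersetCard d, q B ≤ q B' := by
      by_cases hi : i ∈ B₀
      · exact ⟨B₀, hB₀S, hi, hB₀min⟩
      · set τ : Finset (Fin n) := insert i B₀ with hτdef
        have hB₀card : B₀.card = d := Finset.mem_powersetCard_univ.mp hB₀S
        have hτcard : τ.card = d + 1 := by
          rw [hτdef, Finset.card_insert_of_notMem hi, hB₀card]
        obtain ⟨a, ha, b, hb, hab, habeq, hamin⟩ := hwL τ hτcard
        have hiτ : i ∈ τ := Finset.mem_insert_self _ _
        have hrel : ∀ k ∈ τ, p (τ.erase k) + w k = q (τ.erase k) + ∑ l ∈ τ, w l := by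
          intro k hk
          have h1 : (∑ l ∈ τ.erase k, w l) + w k = ∑ l ∈ τ, w l :=
            Finset.sum_erase_add τ w hk
          simp only [hqdef]
          linarith
        have heraseS : ∀ k ∈ τ, τ.erase k ∈ (Finset.univ : Finset (Fin n)).powersetCard d := by
          intro k hk
          rw [Finset.mem_powersetCard_univ, Finset.card_erase_of_mem hk, hτcard]
          omega
        have hBerase : τ.erase i = B₀ := Finset.erase_insert hi
        have himin : ∀ k ∈ τ, p (τ.erase i) + w i ≤ p (τ.erase k) + w k := by
          intro k hk
          rw [hrel i hiτ, hrel k hk]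
          have h2 := hB₀min _ (heraseS k hk)
          rw [hBerase]
          linarith
        -- choose a witness c ≠ i with f c = f i
        have hwitness : ∃ c ∈ τ, c ≠ i ∧
            p (τ.erase c) + w c = p (τ.erase i) + w i := by
          rcases eq_or_ne a i with rfl | hai
          · exact ⟨b, hb, hab.symm, habeq.symm⟩
          · exact ⟨a, ha, hai, le_antisymm (hamin i hiτ) (himin a ha)⟩
        obtain ⟨c, hcτ, hci, hceq⟩ := hwitness
        refine ⟨τ.erase c, heraseS c hcτ, Finset.mem_erase.mpr ⟨hci.symm, hiτ⟩, ?_⟩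
        intro B' hB'
        have h3 : q (τ.erase c) = q B₀ := by
          have h4 := hrel c hcτ
          have h5 := hrel i hiτ
          rw [hBerase] at h5
          rw [hBerase] at hceq
          linarith
        rw [h3]
        exact hB₀min _ hB'
    obtain ⟨B, hBS, hiB, hBmin⟩ := hexists
    have hBcard : B.card = d := Finset.mem_powersetCard_univ.mp hBS
    set σ : Finset (Fin n) := B.erase i with hσdef
    have hiσ : i ∉ σ := Finset.notMem_erase i B
    have hσcard : σ.card = d - 1 := by
      rw [hσdef, Finset.card_erase_of_mem hiB, hBcard]
    have hins' : insert i σ = B := Finset.insert_erase hiB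
    have hσF : σ ∈ F i := (hmemF i σ).mpr ⟨hσcard, hiσ⟩
    have hbound : ∀ j ∈ insert i σᶜ, p B - w i ≤ p (insert j σ) := by
      intro j hj
      have hjσ : j ∉ σ := by
        rcases Finset.mem_insert.mp hj with rfl | hj'
        · exact hiσ
        · exact Finset.mem_compl.mp hj'
      have hjS : insert j σ ∈ (Finset.univ : Finset (Fin n)).powersetCard d := by
        rw [Finset.mem_powersetCard_univ, Finset.card_insert_of_notMem hjσ, hσcard]
        omega
      have h1 := hBmin _ hjS
      have hsB : ∑ k ∈ B, w k = (∑ k ∈ σ, w k) + w i := by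
        rw [← hins', Finset.sum_insert hiσ]; ring
      have hsj : ∑ k ∈ insert j σ, w k = (∑ k ∈ σ, w k) + w j := by
        rw [Finset.sum_insert hjσ]; ring
      have hwj : (0 : ℝ) ≤ w j := by simpa using hw0 j
      simp only [hqdef] at h1
      linarith
    have hMle : p B - w i ≤ (insert i σᶜ).inf' (Finset.insert_nonempty _ _)
        (fun j => p (insert j σ)) := Finset.le_inf' _ _ hbound
    have hgw : g i σ ≤ w i := by
      simp only [hgdef]
      rw [hins']
      linarith
    exact le_trans (hyle i σ hσF) hgw
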